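/- If a pseudometric d on a finite set X is a nonnegative linear combination of split pseudometrics, d = Σ_{σ∈S} α_σ δ_σ, then d satisfies the four-point condition: for all x,y,z,w ∈ X, d(x,y)+d(z,w) ≤ max{ d(x,z)+d(y,w), d(x,w)+d(y,z) }, provided the split system S is pairwise compatible. -/
import Mathlib
set_option maxHeartbeats 1000000


/-- The indicator pseudometric of a split, given by one of its sides `A`. -/
def splitDelta {X : Type*} [Fintype X] [DecidableEq X] (A : Finset X) (i j : X) : ℝ :=
  if i ∈ A ↔ j ∈ A then 0 else 1

lemma splitDelta_comm {X : Type*} [Fintype X] [DecidableEq X] (A : Finset X) (i j : X) :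
    splitDelta A i j = splitDelta A j i := by
  unfold splitDelta
  by_cases h : i ∈ A ↔ j ∈ A
  · rw [if_pos h, if_pos h.symm]
  · rw [if_neg h, if_neg (fun hji => h hji.symm)]

lemma splitDelta_key {X : Type*} [Fintype X] [DecidableEq X] (A : Finset X) (x y z w : X)
    (h : ¬ (splitDelta A x y + splitDelta A z w ≤ splitDelta A x z + splitDelta A y w)) :
    (x ∈ A ↔ z ∈ A) ∧ (y ∈ A ↔ w ∈ A) ∧ ¬(x ∈ A ↔ y ∈ A) := by
  unfold splitDelta at h
  by_cases hx : x ∈ A <;> by_cases hy : y ∈ A <;> by_cases hz : z ∈ A <;> by_cases hw : w ∈ A <;>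
    simp_all

theorem four_point_condition_of_compatible {X : Type*} [Fintype X] [DecidableEq X]
    (S : Finset (Finset X)) (hS : ∀ A ∈ S, A.Nonempty ∧ Aᶜ.Nonempty)
    (hcompat : ∀ A ∈ S, ∀ B ∈ S, A ≠ B →
      A ∩ B = ∅ ∨ A ∩ Bᶜ = ∅ ∨ Aᶜ ∩ B = ∅ ∨ Aᶜ ∩ Bᶜ = ∅)
    (α : Finset X → ℝ) (hα : ∀ A ∈ S, 0 ≤ α A)
    (d : X → X → ℝ) (hd : ∀ i j, d i j = ∑ A ∈ S, α A * splitDelta A i j) :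
    ∀ x y z w : X, d x y + d z w ≤ max (d x z + d y w) (d x w + d y z) := by
  intro x y z w
  by_cases hL : ∀ A ∈ S, splitDelta A x y + splitDelta A z w ≤ splitDelta A x z + splitDelta A y w
  · refine le_max_of_le_left ?_
    rw [hd x y, hd z w, hd x z, hd y w, ← Finset.sum_add_distrib, ← Finset.sum_add_distrib]
    refine Finset.sum_le_sum fun A hA => ?_
    calc α A * splitDelta A x y + α A * splitDelta A z w
        = α A * (splitDelta A x y + splitDelta A z w) := by ring
      _ ≤ α A * (splitDelta A x z + splitDelta A y w) :=
          mul_le_mul_of_nonneg_left (hL A hA) (hα A hA)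
      _ = α A * splitDelta A x z + α A * splitDelta A y w := by ring
  · push_neg at hL
    obtain ⟨A, hA, hAbad⟩ := hL
    obtain ⟨hxzA, hywA, hxyA⟩ := splitDelta_key A x y z w hAbad.not_ge
    have hR : ∀ B ∈ S, splitDelta B x y + splitDelta B z w ≤ splitDelta B x w + splitDelta B y z := by
      intro B hB
      by_contra hBbad
      rw [splitDelta_comm B z w] at hBbad
      obtain ⟨hxwB, hyzB, hxyB⟩ := splitDelta_key B x y w z hBbad
      by_cases hAB : A = B
      · subst hAB; itauto
      · have hc := hcompat A hA B hB hAB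
        simp only [Finset.eq_empty_iff_forall_notMem, Finset.mem_inter, Finset.mem_compl] at hc
        rcases hc with h | h | h | h <;>
          (have h1 := h x; have h2 := h y; have h3 := h z; have h4 := h w; itauto)
    refine le_max_of_le_right ?_
    rw [hd x y, hd z w, hd x w, hd y z, ← Finset.sum_add_distrib, ← Finset.sum_add_distrib]
    refine Finset.sum_le_sum fun B hB => ?_
    calc α B * splitDelta B x y + α B * splitDelta B z w
        = α B * (splitDelta B x y + splitDelta B z w) := by ring
      _ ≤ α B * (splitDelta B x w + splitDelta B y z) :=
          mul_le_mul_of_nonneg_left (hR B hB) (hα B hB)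
      _ = α B * splitDelta B x w + α B * splitDelta B y z := by ring
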